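/- Let q ∈ ℝ with 0 < q < 1 and λ ∈ ℂ. There exists a twice continuously differentiable function u : ℝ → ℂ, not identically zero on [0,1], such that u''(x) = λ² u(x) for all x ∈ [0,1], u(0) = 0, and u'(1) = q λ u(1), if and only if there exists n ∈ ℤ with λ = (1/2)·ln((1+q)/(1−q)) + i (2n+1) π / 2. -/

import Mathlib

lemma hasDerivAt_sinh_mul (lam : ℂ) (x : ℝ) :
    HasDerivAt (fun y : ℝ => Complex.sinh (lam * y)) (lam * Complex.cosh (lam * x)) x := by
  have h : HasDerivAt (fun z : ℂ => Complex.sinh (lam * z)) (lam * Complex.cosh (lam * x)) (x : ℂ) := by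
    simpa [mul_comm, Function.comp_def] using (Complex.hasDerivAt_sinh (lam * x)).comp (x : ℂ)
      ((hasDerivAt_id (x : ℂ)).const_mul lam)
  exact h.comp_ofReal

lemma hasDerivAt_cosh_mul (lam : ℂ) (x : ℝ) :
    HasDerivAt (fun y : ℝ => Complex.cosh (lam * y)) (lam * Complex.sinh (lam * x)) x := by
  have h : HasDerivAt (fun z : ℂ => Complex.cosh (lam * z)) (lam * Complex.sinh (lam * x)) (x : ℂ) := by
    simpa [mul_comm, Function.comp_def] using (Complex.hasDerivAt_cosh (lam * x)).comp (x : ℂ)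
      ((hasDerivAt_id (x : ℂ)).const_mul lam)
  exact h.comp_ofReal

lemma key_iff (q : ℝ) (hq0 : 0 < q) (hq1 : q < 1) (lam : ℂ) :
    Complex.cosh lam = (q : ℂ) * Complex.sinh lam ↔
    ∃ n : ℤ, lam = ((Real.log ((1 + q) / (1 - q)) : ℂ)) / 2 +
      (2 * (n : ℂ) + 1) * (Real.pi : ℂ) / 2 * Complex.I := by
  have hr : (0:ℝ) < (1 + q) / (1 - q) := div_pos (by linarith) (by linarith)
  set r : ℝ := (1 + q) / (1 - q) with hrdef
  have hq1c : ((1:ℂ) - q) ≠ 0 := by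
    intro h
    have : (1:ℝ) - q = 0 := by exact_mod_cast h
    linarith
  have hE : Complex.exp lam ≠ 0 := Complex.exp_ne_zero lam
  have h1 : Complex.cosh lam = (q : ℂ) * Complex.sinh lam ↔
      Complex.exp (2 * lam) = -(r : ℂ) := by
    rw [Complex.cosh, Complex.sinh]
    rw [show (2:ℂ) * lam = lam + lam by ring, Complex.exp_add, Complex.exp_neg]
    have hrc : ((r:ℝ):ℂ) = ((1:ℂ) + q) / ((1:ℂ) - q) := by
      push_cast [hrdef]; ring
    rw [hrc]
    constructor
    · intro h
      field_simp at h ⊢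
      linear_combination h
    · intro h
      field_simp at h ⊢
      linear_combination h
  rw [h1]
  have hlog : Complex.exp ((Real.log r : ℂ) + Real.pi * Complex.I) = -(r:ℂ) := by
    rw [Complex.exp_add, Complex.exp_pi_mul_I]
    rw [show ((Real.log r : ℝ):ℂ) = Complex.ofReal (Real.log r) from rfl]
    rw [← Complex.ofReal_exp, Real.exp_log hr]
    ring
  rw [← hlog, Complex.exp_eq_exp_iff_exists_int]
  constructor
  · rintro ⟨n, h⟩
    exact ⟨n, by linear_combination h / 2⟩
  · rintro ⟨n, h⟩
    exact ⟨n, by linear_combination 2 * h⟩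
lemma forward_dir (q : ℝ) (lam : ℂ) (u : ℝ → ℂ) (hu : ContDiff ℝ 2 u)
    (hnz : ¬ ∀ x ∈ Set.Icc (0:ℝ) 1, u x = 0)
    (hode : ∀ x ∈ Set.Icc (0:ℝ) 1, deriv (deriv u) x = lam ^ 2 * u x)
    (h0 : u 0 = 0) (hb : deriv u 1 = (q:ℂ) * lam * u 1) :
    Complex.cosh lam = (q:ℂ) * Complex.sinh lam := by
  set v := deriv u with hv
  have hu1 : ContDiff ℝ 1 v := by
    have h2 : ContDiff ℝ ((1:ℕ) + 1) u := by exact_mod_cast hu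
    exact (contDiff_succ_iff_deriv.mp h2).2.2
  have hud : Differentiable ℝ u := hu.differentiable (by norm_num)
  have hvd : Differentiable ℝ v := hu1.differentiable (by norm_num)
  have hux : ∀ x : ℝ, HasDerivAt u (v x) x := fun x => (hud x).hasDerivAt
  have hvx : ∀ x : ℝ, HasDerivAt v (deriv v x) x := fun x => (hvd x).hasDerivAt
  have hucont : Continuous u := hu.continuous
  have hvcont : Continuous v := hu1.continuous
  -- the two conserved quantities
  set A : ℝ → ℂ := fun x => lam * u x * Complex.cosh (lam * x) - v x * Complex.sinh (lam * x) with hA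
  set B : ℝ → ℂ := fun x => v x * Complex.cosh (lam * x) - lam * u x * Complex.sinh (lam * x) with hB
  have hAderiv : ∀ x ∈ Set.Icc (0:ℝ) 1, HasDerivAt A 0 x := by
    intro x hx
    have h2 : deriv v x = lam ^ 2 * u x := hode x hx
    have := (((hux x).const_mul lam).mul (hasDerivAt_cosh_mul lam x)).sub
      ((hvx x).mul (hasDerivAt_sinh_mul lam x))
    convert this using 1
    case e'_4 => rfl
    case e'_8 => rfl
    rw [h2]; ring
  have hBderiv : ∀ x ∈ Set.Icc (0:ℝ) 1, HasDerivAt B 0 x := by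
    intro x hx
    have h2 : deriv v x = lam ^ 2 * u x := hode x hx
    have := ((hvx x).mul (hasDerivAt_cosh_mul lam x)).sub
      (((hux x).const_mul lam).mul (hasDerivAt_sinh_mul lam x))
    convert this using 1
    case e'_4 => rfl
    case e'_8 => rfl
    rw [h2]; ring
  have hAcont : ContinuousOn A (Set.Icc 0 1) :=
    (((continuous_const.mul hucont).mul (Complex.continuous_cosh.comp
      (continuous_const.mul Complex.continuous_ofReal))).sub
      (hvcont.mul (Complex.continuous_sinh.comp
      (continuous_const.mul Complex.continuous_ofReal)))).continuousOn
  have hBcont : ContinuousOn B (Set.Icc 0 1) :=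
    ((hvcont.mul (Complex.continuous_cosh.comp
      (continuous_const.mul Complex.continuous_ofReal))).sub
      ((continuous_const.mul hucont).mul (Complex.continuous_sinh.comp
      (continuous_const.mul Complex.continuous_ofReal)))).continuousOn
  have hAconst : ∀ x ∈ Set.Icc (0:ℝ) 1, A x = A 0 :=
    constant_of_has_deriv_right_zero hAcont
      (fun x hx => (hAderiv x (Set.Ico_subset_Icc_self hx)).hasDerivWithinAt)
  have hBconst : ∀ x ∈ Set.Icc (0:ℝ) 1, B x = B 0 :=
    constant_of_has_deriv_right_zero hBcont
      (fun x hx => (hBderiv x (Set.Ico_subset_Icc_self hx)).hasDerivWithinAt)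
  have hA0 : A 0 = 0 := by simp [hA, h0]
  have hB0 : B 0 = v 0 := by simp [hB, h0]
  -- pointwise formulas
  have key : ∀ x ∈ Set.Icc (0:ℝ) 1,
      v x = v 0 * Complex.cosh (lam * x) ∧ lam * u x = v 0 * Complex.sinh (lam * x) := by
    intro x hx
    have hAx : lam * u x * Complex.cosh (lam * x) - v x * Complex.sinh (lam * x) = 0 :=
      (hAconst x hx).trans hA0
    have hBx : v x * Complex.cosh (lam * x) - lam * u x * Complex.sinh (lam * x) = v 0 :=
      (hBconst x hx).trans hB0
    have hP : Complex.cosh (lam * x) ^ 2 - Complex.sinh (lam * x) ^ 2 = 1 :=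
      Complex.cosh_sq_sub_sinh_sq (lam * x)
    constructor
    · linear_combination Complex.cosh (lam * x) * hBx + Complex.sinh (lam * x) * hAx - v x * hP
    · linear_combination Complex.sinh (lam * x) * hBx + Complex.cosh (lam * x) * hAx
        - (lam * u x) * hP
  -- nontriviality gives v 0 ≠ 0
  have hv0 : v 0 ≠ 0 := by
    intro hz
    apply hnz
    have huz : ∀ x ∈ Set.Icc (0:ℝ) 1, u x = u 0 := by
      apply constant_of_has_deriv_right_zero hucont.continuousOn
      intro x hx
      have : v x = 0 := by
        rw [(key x (Set.Ico_subset_Icc_self hx)).1, hz, zero_mul]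
      exact (this ▸ hux x).hasDerivWithinAt
    intro x hx
    rw [huz x hx, h0]
  have h1m : (1:ℝ) ∈ Set.Icc (0:ℝ) 1 := by norm_num
  have hc1 : v 1 = v 0 * Complex.cosh lam := by
    have := (key 1 h1m).1; simpa using this
  have hs1 : lam * u 1 = v 0 * Complex.sinh lam := by
    have := (key 1 h1m).2; simpa using this
  have hfin : v 0 * Complex.cosh lam = v 0 * ((q:ℂ) * Complex.sinh lam) := by
    rw [← hc1, hb]; linear_combination (q:ℂ) * hs1
  exact mul_left_cancel₀ hv0 hfin
lemma backward_dir (q : ℝ) (lam : ℂ)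
    (h : Complex.cosh lam = (q:ℂ) * Complex.sinh lam) :
    ∃ u : ℝ → ℂ, ContDiff ℝ 2 u ∧ (¬ ∀ x ∈ Set.Icc (0:ℝ) 1, u x = 0) ∧
      (∀ x ∈ Set.Icc (0:ℝ) 1, deriv (deriv u) x = lam ^ 2 * u x) ∧
      u 0 = 0 ∧ deriv u 1 = (q : ℂ) * lam * u 1 := by
  refine ⟨fun x : ℝ => Complex.sinh (lam * x), ?_, ?_, ?_, ?_, ?_⟩
  · have : ContDiff ℝ 2 (fun x : ℝ => lam * (x:ℂ)) :=
      contDiff_const.mul Complex.ofRealCLM.contDiff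
    exact (Complex.contDiff_sinh.restrict_scalars ℝ).comp this
  · intro hall
    have hs : Complex.sinh lam = 0 := by
      have := hall 1 (by norm_num)
      simpa using this
    have hc : Complex.cosh lam = 0 := by rw [h, hs, mul_zero]
    have := Complex.cosh_sq_sub_sinh_sq lam
    rw [hs, hc] at this
    norm_num at this
  · intro x _
    have hd1 : deriv (fun y : ℝ => Complex.sinh (lam * y)) =
        fun y : ℝ => lam * Complex.cosh (lam * y) :=
      funext fun y => (hasDerivAt_sinh_mul lam y).deriv
    rw [hd1]
    have hd2 : HasDerivAt (fun y : ℝ => lam * Complex.cosh (lam * y))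
        (lam * (lam * Complex.sinh (lam * x))) x := (hasDerivAt_cosh_mul lam x).const_mul lam
    rw [hd2.deriv]; ring
  · simp
  · have hd1 : deriv (fun y : ℝ => Complex.sinh (lam * y)) 1 = lam * Complex.cosh (lam * (1:ℝ)) :=
      (hasDerivAt_sinh_mul lam 1).deriv
    rw [hd1]
    push_cast
    rw [mul_one, h]
    ring

/-- Eigenvalue characterization (Lemma 3.1, case `0 < q < 1`) for the anti-stable wave
equation: the boundary value problem `u'' = λ²u`, `u(0) = 0`, `u'(1) = qλu(1)` has a
nontrivial solution iff `λ = (1/2)ln((1+q)/(1−q)) + i(2n+1)π/2` for some integer `n`. -/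
theorem wave_eigenvalues_q_lt_one (q : ℝ) (hq0 : 0 < q) (hq1 : q < 1) (lam : ℂ) :
    (∃ u : ℝ → ℂ, ContDiff ℝ 2 u ∧ (¬ ∀ x ∈ Set.Icc (0:ℝ) 1, u x = 0) ∧
      (∀ x ∈ Set.Icc (0:ℝ) 1, deriv (deriv u) x = lam ^ 2 * u x) ∧
      u 0 = 0 ∧ deriv u 1 = (q : ℂ) * lam * u 1) ↔
    ∃ n : ℤ, lam = ((Real.log ((1 + q) / (1 - q)) : ℂ)) / 2 +
      (2 * (n : ℂ) + 1) * (Real.pi : ℂ) / 2 * Complex.I := by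
  rw [← key_iff q hq0 hq1 lam]
  constructor
  · rintro ⟨u, hu, hnz, hode, h0, hb⟩
    exact forward_dir q lam u hu hnz hode h0 hb
  · exact backward_dir q lam
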